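/- Let A be an m×n matrix, T an index set with |T| = k and δ_k(A) < 1, and let Ť_d, T_d be index sets disjoint from T and from each other with |Ť_d| ≤ Š and |T_d| ≤ S. Define M = I - A_T(A_Tᵀ A_T)^{-1} A_Tᵀ. Then ‖A_{Ť_d}ᵀ M A_{T_d}‖ ≤ θ_{Š,S} + θ_{Š,k} θ_{S,k}/(1 - δ_k). -/

import Mathlib

open Matrix BigOperators Finset

noncomputable def cols {m n : ℕ} (A : Matrix (Fin m) (Fin n) ℝ) (T : Finset (Fin n)) :
    Matrix (Fin m) {j // j ∈ T} ℝ :=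
  Matrix.of fun i j => A i j.1

noncomputable def l2 {ι : Type*} [Fintype ι] (v : ι → ℝ) : ℝ :=
  Real.sqrt (∑ i, v i ^ 2)

/-- `δ` is a valid `S`-restricted-isometry bound for `A`. -/
def RIPBound {m n : ℕ} (A : Matrix (Fin m) (Fin n) ℝ) (S : ℕ) (δ : ℝ) : Prop :=
  ∀ T : Finset (Fin n), T.card ≤ S → ∀ c : {j // j ∈ T} → ℝ,
    (1 - δ) * (∑ j, c j ^ 2) ≤ (∑ i, ((cols A T).mulVec c i) ^ 2) ∧
    (∑ i, ((cols A T).mulVec c i) ^ 2) ≤ (1 + δ) * (∑ j, c j ^ 2)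

/-- The `S`-restricted isometry constant `δ_S(A)`: the smallest valid RIP bound. -/
noncomputable def ripConst {m n : ℕ} (A : Matrix (Fin m) (Fin n) ℝ) (S : ℕ) : ℝ :=
  sInf {δ : ℝ | 0 ≤ δ ∧ RIPBound A S δ}

/-- `θ` is a valid `(S₁,S₂)`-restricted-orthogonality bound for `A`. -/
def ROCBound {m n : ℕ} (A : Matrix (Fin m) (Fin n) ℝ) (S₁ S₂ : ℕ) (θ : ℝ) : Prop :=
  ∀ T₁ T₂ : Finset (Fin n), Disjoint T₁ T₂ → T₁.card ≤ S₁ → T₂.card ≤ S₂ →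
    ∀ c₁ : {j // j ∈ T₁} → ℝ, ∀ c₂ : {j // j ∈ T₂} → ℝ,
      |∑ i, (cols A T₁).mulVec c₁ i * (cols A T₂).mulVec c₂ i| ≤ θ * l2 c₁ * l2 c₂

/-- The restricted orthogonality constant `θ_{S₁,S₂}(A)`. -/
noncomputable def rocConst {m n : ℕ} (A : Matrix (Fin m) (Fin n) ℝ) (S₁ S₂ : ℕ) : ℝ :=
  sInf {θ : ℝ | 0 ≤ θ ∧ ROCBound A S₁ S₂ θ}

/-- `a_k(S, Š)` from Modified-CS. -/
noncomputable def aConst {m n : ℕ} (A : Matrix (Fin m) (Fin n) ℝ) (k S S' : ℕ) : ℝ :=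
  (rocConst A S' S + rocConst A S' k * rocConst A S k / (1 - ripConst A k)) /
    (1 - ripConst A S - (rocConst A S k) ^ 2 / (1 - ripConst A k))

/-- `M = I - A_T (A_Tᵀ A_T)⁻¹ A_Tᵀ`, projection onto orthogonal complement of span of `A_T`. -/
noncomputable def projM {m n : ℕ} (A : Matrix (Fin m) (Fin n) ℝ) (T : Finset (Fin n)) :
    Matrix (Fin m) (Fin m) ℝ :=
  1 - cols A T * ((cols A T)ᵀ * cols A T)⁻¹ * (cols A T)ᵀ

-- auxiliary lemmas

lemma l2_nonneg {ι : Type*} [Fintype ι] (v : ι → ℝ) : 0 ≤ l2 v := Real.sqrt_nonneg _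

lemma l2_sq {ι : Type*} [Fintype ι] (v : ι → ℝ) : l2 v ^ 2 = ∑ i, v i ^ 2 :=
  Real.sq_sqrt (Finset.sum_nonneg fun i _ => sq_nonneg _)

lemma le_add_sInf_mul {s : Set ℝ} (hne : s.Nonempty) (hbd : BddBelow s) {X Y Z : ℝ}
    (hX : 0 ≤ X) (h : ∀ δ ∈ s, Y ≤ Z + δ * X) : Y ≤ Z + sInf s * X := by
  have hmono : Monotone (fun δ : ℝ => δ * X) := fun a b hab => mul_le_mul_of_nonneg_right hab hX
  have hc : ContinuousAt (fun δ : ℝ => δ * X) (sInf s) := (continuous_mul_right X).continuousAt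
  have heq := hmono.map_csInf_of_continuousAt hc hne hbd
  have hle : Y - Z ≤ sInf ((fun δ : ℝ => δ * X) '' s) := by
    apply le_csInf (hne.image _)
    rintro b ⟨δ, hδ, rfl⟩
    have := h δ hδ
    dsimp only
    linarith
  rw [← heq] at hle
  linarith

lemma cols_sq_bound {m n : ℕ} (A : Matrix (Fin m) (Fin n) ℝ) (T : Finset (Fin n))
    (c : {j // j ∈ T} → ℝ) :
    ∑ i, ((cols A T).mulVec c i) ^ 2 ≤ (∑ i, ∑ j, (A i j) ^ 2) * ∑ j, c j ^ 2 := by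
  rw [Finset.sum_mul]
  apply Finset.sum_le_sum
  intro i _
  have h1 : ((cols A T).mulVec c i) ^ 2 ≤ (∑ j : {j // j ∈ T}, (A i j.1) ^ 2) * ∑ j, c j ^ 2 := by
    have := Finset.sum_mul_sq_le_sq_mul_sq Finset.univ (fun j : {j // j ∈ T} => A i j.1) c
    simpa [cols, Matrix.mulVec, dotProduct] using this
  refine h1.trans (mul_le_mul_of_nonneg_right ?_ (Finset.sum_nonneg fun _ _ => sq_nonneg _))
  have h2 : ∑ j : {j // j ∈ T}, (A i j.1) ^ 2 = ∑ j ∈ T, (A i j) ^ 2 :=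
    Finset.sum_coe_sort T (fun j : Fin n => A i j ^ 2)
  rw [h2]
  exact Finset.sum_le_sum_of_subset_of_nonneg (Finset.subset_univ T)
    (fun j _ _ => sq_nonneg _)

lemma ripSet_nonempty {m n : ℕ} (A : Matrix (Fin m) (Fin n) ℝ) (S : ℕ) :
    {δ : ℝ | 0 ≤ δ ∧ RIPBound A S δ}.Nonempty := by
  set C := ∑ i, ∑ j, (A i j) ^ 2 with hC
  have hC0 : 0 ≤ C := Finset.sum_nonneg fun _ _ => Finset.sum_nonneg fun _ _ => sq_nonneg _
  refine ⟨1 + C, by linarith, fun T hTc c => ?_⟩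
  have hc0 : (0:ℝ) ≤ ∑ j, c j ^ 2 := Finset.sum_nonneg fun _ _ => sq_nonneg _
  have hb := cols_sq_bound A T c
  constructor
  · have : (0:ℝ) ≤ ∑ i, ((cols A T).mulVec c i) ^ 2 := Finset.sum_nonneg fun _ _ => sq_nonneg _
    nlinarith
  · nlinarith

lemma abs_dot_le {ι : Type*} [Fintype ι] (f g : ι → ℝ) :
    |∑ i, f i * g i| ≤ l2 f * l2 g := by
  have h := Finset.sum_mul_sq_le_sq_mul_sq Finset.univ f g
  have : |∑ i, f i * g i| = Real.sqrt ((∑ i, f i * g i) ^ 2) := (Real.sqrt_sq_eq_abs _).symm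
  rw [this]
  calc Real.sqrt ((∑ i, f i * g i) ^ 2) ≤ Real.sqrt ((∑ i, f i ^ 2) * ∑ i, g i ^ 2) :=
        Real.sqrt_le_sqrt h
    _ = l2 f * l2 g := by
        rw [Real.sqrt_mul (Finset.sum_nonneg fun _ _ => sq_nonneg _)]; rfl

lemma rocSet_nonempty {m n : ℕ} (A : Matrix (Fin m) (Fin n) ℝ) (S₁ S₂ : ℕ) :
    {θ : ℝ | 0 ≤ θ ∧ ROCBound A S₁ S₂ θ}.Nonempty := by
  set C := ∑ i, ∑ j, (A i j) ^ 2 with hC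
  have hC0 : 0 ≤ C := Finset.sum_nonneg fun _ _ => Finset.sum_nonneg fun _ _ => sq_nonneg _
  refine ⟨C + 1, by linarith, fun T₁ T₂ _ _ _ c₁ c₂ => ?_⟩
  have h := abs_dot_le ((cols A T₁).mulVec c₁) ((cols A T₂).mulVec c₂)
  have key : ∀ (T : Finset (Fin n)) (c : {j // j ∈ T} → ℝ),
      l2 ((cols A T).mulVec c) ≤ Real.sqrt (C + 1) * l2 c := by
    intro T c
    rw [l2, l2, ← Real.sqrt_mul (by positivity)]
    apply Real.sqrt_le_sqrt
    have hb := cols_sq_bound A T c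
    have hc0 : (0:ℝ) ≤ ∑ j, c j ^ 2 := Finset.sum_nonneg fun _ _ => sq_nonneg _
    nlinarith
  have h1 := key T₁ c₁
  have h2 := key T₂ c₂
  have hl2 := l2_nonneg ((cols A T₂).mulVec c₂)
  have hc1 := l2_nonneg c₁
  have hc2 := l2_nonneg c₂
  have hs : Real.sqrt (C + 1) ^ 2 = C + 1 := Real.sq_sqrt (by linarith)
  have hs0 : 0 ≤ Real.sqrt (C + 1) := Real.sqrt_nonneg _
  have hmul : l2 ((cols A T₁).mulVec c₁) * l2 ((cols A T₂).mulVec c₂) ≤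
      (Real.sqrt (C + 1) * l2 c₁) * (Real.sqrt (C + 1) * l2 c₂) :=
    mul_le_mul h1 h2 hl2 (by positivity)
  calc |∑ i, (cols A T₁).mulVec c₁ i * (cols A T₂).mulVec c₂ i|
      ≤ l2 ((cols A T₁).mulVec c₁) * l2 ((cols A T₂).mulVec c₂) := h
    _ ≤ (Real.sqrt (C + 1) * l2 c₁) * (Real.sqrt (C + 1) * l2 c₂) := hmul
    _ = Real.sqrt (C + 1) ^ 2 * l2 c₁ * l2 c₂ := by ring
    _ = (C + 1) * l2 c₁ * l2 c₂ := by rw [hs]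

lemma ripConst_spec {m n : ℕ} (A : Matrix (Fin m) (Fin n) ℝ) (S : ℕ) :
    0 ≤ ripConst A S ∧ RIPBound A S (ripConst A S) := by
  have hne := ripSet_nonempty A S
  have hbd : BddBelow {δ : ℝ | 0 ≤ δ ∧ RIPBound A S δ} := ⟨0, fun δ hδ => hδ.1⟩
  have h0 : 0 ≤ ripConst A S := le_csInf hne fun δ hδ => hδ.1
  refine ⟨h0, fun T hTc c => ?_⟩
  set X := ∑ j, c j ^ 2 with hX
  set Y := ∑ i, ((cols A T).mulVec c i) ^ 2 with hY
  have hX0 : 0 ≤ X := Finset.sum_nonneg fun _ _ => sq_nonneg _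
  constructor
  · have := le_add_sInf_mul hne hbd (X := X) (Y := X - Y) (Z := 0) hX0
      (fun δ hδ => by have := (hδ.2 T hTc c).1; simp only [zero_add]; nlinarith)
    simp only [zero_add] at this
    unfold ripConst
    nlinarith
  · have := le_add_sInf_mul hne hbd (X := X) (Y := Y) (Z := X) hX0
      (fun δ hδ => by have := (hδ.2 T hTc c).2; nlinarith)
    unfold ripConst
    nlinarith

lemma rocConst_spec {m n : ℕ} (A : Matrix (Fin m) (Fin n) ℝ) (S₁ S₂ : ℕ) :
    0 ≤ rocConst A S₁ S₂ ∧ ROCBound A S₁ S₂ (rocConst A S₁ S₂) := by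
  have hne := rocSet_nonempty A S₁ S₂
  have hbd : BddBelow {θ : ℝ | 0 ≤ θ ∧ ROCBound A S₁ S₂ θ} := ⟨0, fun θ hθ => hθ.1⟩
  have h0 : 0 ≤ rocConst A S₁ S₂ := le_csInf hne fun θ hθ => hθ.1
  refine ⟨h0, fun T₁ T₂ hd hc1 hc2 c₁ c₂ => ?_⟩
  have := le_add_sInf_mul hne hbd (X := l2 c₁ * l2 c₂)
    (Y := |∑ i, (cols A T₁).mulVec c₁ i * (cols A T₂).mulVec c₂ i|) (Z := 0)
    (mul_nonneg (l2_nonneg c₁) (l2_nonneg c₂))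
    (fun θ hθ => by have := hθ.2 T₁ T₂ hd hc1 hc2 c₁ c₂; nlinarith)
  unfold rocConst
  nlinarith

theorem stmt6 {m n k S S' : ℕ} (A : Matrix (Fin m) (Fin n) ℝ)
    (T Td Td' : Finset (Fin n)) (hT : T.card = k) (hδk : ripConst A k < 1)
    (hTd : Td.card ≤ S) (hTd' : Td'.card ≤ S')
    (h1 : Disjoint T Td) (h2 : Disjoint T Td') (h3 : Disjoint Td Td') :
    ∀ v : {j // j ∈ Td} → ℝ,
      l2 (((cols A Td')ᵀ * projM A T * cols A Td).mulVec v) ≤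
        (rocConst A S' S + rocConst A S' k * rocConst A S k / (1 - ripConst A k)) * l2 v := by
  intro v
  obtain ⟨hδ0, hRIP⟩ := ripConst_spec A k
  obtain ⟨hθ10, hROC1⟩ := rocConst_spec A S' S
  obtain ⟨hθ20, hROC2⟩ := rocConst_spec A S' k
  obtain ⟨hθ30, hROC3⟩ := rocConst_spec A S k
  set δ := ripConst A k with hδdef
  set θ₁ := rocConst A S' S with hθ₁def
  set θ₂ := rocConst A S' k with hθ₂def
  set θ₃ := rocConst A S k with hθ₃def
  clear_value δ θ₁ θ₂ θ₃
  have hδ1 : (0:ℝ) < 1 - δ := by linarith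
  set B₀ := cols A T with hB₀
  set B₁ := cols A Td' with hB₁
  set B₂ := cols A Td with hB₂
  clear_value B₀ B₁ B₂
  set G := B₀ᵀ * B₀ with hGdef
  clear_value G
  have quad : ∀ x : {j // j ∈ T} → ℝ, x ⬝ᵥ G.mulVec x = ∑ i, (B₀.mulVec x i) ^ 2 := by
    intro x
    rw [hGdef, ← Matrix.mulVec_mulVec, Matrix.dotProduct_mulVec, Matrix.vecMul_transpose]
    simp [dotProduct, sq]
  have hPD : G.PosDef := by
    rw [Matrix.posDef_iff_dotProduct_mulVec]
    constructor
    · rw [hGdef]; simpa [Matrix.conjTranspose_eq_transpose_of_trivial] using Matrix.isHermitian_conjTranspose_mul_self B₀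
    · intro x hx
      have hx2 : 0 < ∑ j, x j ^ 2 := by
        obtain ⟨j, hj⟩ := Function.ne_iff.mp hx
        exact Finset.sum_pos' (fun i _ => sq_nonneg _)
          ⟨j, Finset.mem_univ j, lt_of_le_of_ne (sq_nonneg _) (Ne.symm (pow_ne_zero 2 hj))⟩
      have hlow := (hRIP T hT.le x).1
      rw [← hB₀] at hlow
      have hq : (0:ℝ) < x ⬝ᵥ G.mulVec x := by rw [quad x]; nlinarith
      have hsx : star x = x := by ext j; simp
      rw [hsx]
      exact hq
  have hdet : IsUnit G.det := hPD.det_pos.ne'.isUnit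
  set y := B₂.mulVec v with hy
  set u := G⁻¹.mulVec (B₀ᵀ.mulVec y) with hudef
  clear_value y u
  have hGu : G.mulVec u = B₀ᵀ.mulVec y := by
    rw [hudef, Matrix.mulVec_mulVec, Matrix.mul_nonsing_inv G hdet, Matrix.one_mulVec]
  set w := ((B₁ᵀ * projM A T * B₂).mulVec v) with hwdef
  clear_value w
  have hwsplit : w = B₁ᵀ.mulVec y - B₁ᵀ.mulVec (B₀.mulVec u) := by
    rw [hwdef, hudef, hy, projM, ← hB₀, ← hGdef]
    simp only [Matrix.mul_sub, Matrix.sub_mul, Matrix.mul_one, Matrix.sub_mulVec,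
      Matrix.mulVec_mulVec, Matrix.mul_assoc]
  have e1 : ∀ z : Fin m → ℝ, w ⬝ᵥ (B₁ᵀ.mulVec z) = (B₁.mulVec w) ⬝ᵥ z := fun z => by
    rw [Matrix.dotProduct_mulVec, Matrix.vecMul_transpose]
  have hsum : ∑ j, w j ^ 2 = (B₁.mulVec w) ⬝ᵥ y - (B₁.mulVec w) ⬝ᵥ (B₀.mulVec u) := by
    have hww : ∑ j, w j ^ 2 = w ⬝ᵥ w := by simp [dotProduct, sq]
    rw [hww]
    nth_rewrite 2 [hwsplit]
    rw [dotProduct_sub, e1, e1]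
  have hR1 : |(B₁.mulVec w) ⬝ᵥ y| ≤ θ₁ * l2 w * l2 v := by
    have h := hROC1 Td' Td h3.symm hTd' hTd w v
    rw [← hB₁, ← hB₂] at h
    rw [hy]
    exact h
  have hR2 : |(B₁.mulVec w) ⬝ᵥ (B₀.mulVec u)| ≤ θ₂ * l2 w * l2 u := by
    have h := hROC2 Td' T h2.symm hTd' hT.le w u
    rw [← hB₁, ← hB₀] at h
    exact h
  have hR3 : |y ⬝ᵥ (B₀.mulVec u)| ≤ θ₃ * l2 v * l2 u := by
    have h := hROC3 Td T h1.symm hTd hT.le v u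
    rw [← hB₂, ← hB₀] at h
    rw [hy]
    exact h
  have hB0u : ∑ i, (B₀.mulVec u i) ^ 2 = y ⬝ᵥ (B₀.mulVec u) := by
    calc ∑ i, (B₀.mulVec u i) ^ 2 = u ⬝ᵥ G.mulVec u := (quad u).symm
      _ = u ⬝ᵥ B₀ᵀ.mulVec y := by rw [hGu]
      _ = (B₀.mulVec u) ⬝ᵥ y := by
          rw [Matrix.dotProduct_mulVec, Matrix.vecMul_transpose]
      _ = y ⬝ᵥ (B₀.mulVec u) := dotProduct_comm _ _
  have hu2 : (1 - δ) * (l2 u) ^ 2 ≤ θ₃ * l2 v * l2 u := by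
    rw [l2_sq]
    have hlow := (hRIP T hT.le u).1
    rw [← hB₀] at hlow
    calc (1 - δ) * ∑ j, u j ^ 2 ≤ ∑ i, (B₀.mulVec u i) ^ 2 := hlow
      _ = y ⬝ᵥ (B₀.mulVec u) := hB0u
      _ ≤ |y ⬝ᵥ (B₀.mulVec u)| := le_abs_self _
      _ ≤ θ₃ * l2 v * l2 u := hR3
  have huB : l2 u ≤ θ₃ * l2 v / (1 - δ) := by
    rcases eq_or_lt_of_le (l2_nonneg u) with h0 | h0
    · rw [← h0]
      exact div_nonneg (mul_nonneg hθ30 (l2_nonneg v)) hδ1.le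
    · rw [le_div_iff₀ hδ1]
      nlinarith
  have hWsq : (l2 w) ^ 2 ≤ (θ₁ + θ₂ * θ₃ / (1 - δ)) * l2 v * l2 w := by
    rw [l2_sq]
    have habs : ∑ j, w j ^ 2 ≤ θ₁ * l2 w * l2 v + θ₂ * l2 w * l2 u := by
      rw [hsum]
      calc (B₁.mulVec w) ⬝ᵥ y - (B₁.mulVec w) ⬝ᵥ (B₀.mulVec u)
          ≤ |(B₁.mulVec w) ⬝ᵥ y| + |(B₁.mulVec w) ⬝ᵥ (B₀.mulVec u)| := by
            have l1 := le_abs_self ((B₁.mulVec w) ⬝ᵥ y)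
            have l2 := neg_abs_le ((B₁.mulVec w) ⬝ᵥ (B₀.mulVec u))
            linarith
        _ ≤ θ₁ * l2 w * l2 v + θ₂ * l2 w * l2 u := add_le_add hR1 hR2
    have hlw := l2_nonneg w
    have hlv := l2_nonneg v
    have hlu := l2_nonneg u
    have h4 : θ₂ * l2 w * l2 u ≤ θ₂ * l2 w * (θ₃ * l2 v / (1 - δ)) :=
      mul_le_mul_of_nonneg_left huB (mul_nonneg hθ20 hlw)
    calc ∑ j, w j ^ 2 ≤ θ₁ * l2 w * l2 v + θ₂ * l2 w * l2 u := habs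
      _ ≤ θ₁ * l2 w * l2 v + θ₂ * l2 w * (θ₃ * l2 v / (1 - δ)) := by linarith
      _ = (θ₁ + θ₂ * θ₃ / (1 - δ)) * l2 v * l2 w := by field_simp
  have hRHS0 : 0 ≤ (θ₁ + θ₂ * θ₃ / (1 - δ)) * l2 v :=
    mul_nonneg (add_nonneg hθ10 (div_nonneg (mul_nonneg hθ20 hθ30) hδ1.le)) (l2_nonneg v)
  rcases eq_or_lt_of_le (l2_nonneg w) with h0 | h0
  · rw [← h0]; exact hRHS0
  · nlinarith
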